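/- arXiv:2309.11765 — 4 statements merged into one kernel-verified Lean document; each statement's English description precedes it below -/
import Mathlib

section
/- If a randomized mechanism M is (ε, δ)-differentially private, then the subsampled mechanism that first selects each record independently with probability γ (Poisson subsampling) and then runs M on the subsample is (ε', δ')-differentially private with ε' = log(1 + γ(e^ε − 1)) and δ' = γδ. -/
open MeasureTheory

variable {ι Ω : Type*} [MeasurableSpace Ω] [DecidableEq ι]

/-- Neighboring datasets: differ by addition/removal of one record. -/
def Neighbors (D D' : Finset ι) : Prop :=
  (∃ i ∉ D, D' = insert i D) ∨ (∃ i ∉ D', D = insert i D')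

/-- `(ε, δ)`-differential privacy. -/
def IsDP (M : Finset ι → Measure Ω) (ε δ : ℝ) : Prop :=
  ∀ D D', Neighbors D D' → ∀ S : Set Ω, MeasurableSet S →
    M D S ≤ ENNReal.ofReal (Real.exp ε) * M D' S + ENNReal.ofReal δ

/-- Poisson subsampling with rate `γ`: each record is kept independently with
probability `γ`, and then `M` is run on the subsample. -/
noncomputable def poissonSubsample (γ : ℝ) (M : Finset ι → Measure Ω) (D : Finset ι) :
    Measure Ω :=
  ∑ s ∈ D.powerset,
    (ENNReal.ofReal γ ^ s.card * ENNReal.ofReal (1 - γ) ^ (D.card - s.card)) • M s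

lemma poissonSubsample_apply (γ : ℝ) (M : Finset ι → Measure Ω) (D : Finset ι) (S : Set Ω) :
    poissonSubsample γ M D S =
      ∑ s ∈ D.powerset,
        (ENNReal.ofReal γ ^ s.card * ENNReal.ofReal (1 - γ) ^ (D.card - s.card)) * M s S := by
  simp [poissonSubsample, Measure.finset_sum_apply, Measure.smul_apply, smul_eq_mul]

lemma poisson_sum_weights (γ : ℝ) (hγ0 : 0 ≤ γ) (hγ1 : γ ≤ 1) (D : Finset ι) :
    ∑ s ∈ D.powerset,
      ENNReal.ofReal γ ^ s.card * ENNReal.ofReal (1 - γ) ^ (D.card - s.card) = 1 := by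
  have hxy : ENNReal.ofReal γ + ENNReal.ofReal (1 - γ) = 1 := by
    rw [← ENNReal.ofReal_add hγ0 (by linarith)]
    norm_num
  have h := Finset.prod_add (fun _ : ι => ENNReal.ofReal γ)
    (fun _ : ι => ENNReal.ofReal (1 - γ)) D
  simp only [Finset.prod_const, hxy, one_pow] at h
  calc ∑ s ∈ D.powerset,
        ENNReal.ofReal γ ^ s.card * ENNReal.ofReal (1 - γ) ^ (D.card - s.card)
      = ∑ s ∈ D.powerset,
        ENNReal.ofReal γ ^ s.card * ENNReal.ofReal (1 - γ) ^ (D \ s).card :=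
        Finset.sum_congr rfl (fun s hs => by
          rw [Finset.card_sdiff_of_subset (Finset.mem_powerset.mp hs)])
    _ = 1 := h.symm

lemma poissonSubsample_insert_apply (γ : ℝ) (M : Finset ι → Measure Ω) (D : Finset ι)
    (i : ι) (hi : i ∉ D) (S : Set Ω) :
    poissonSubsample γ M (insert i D) S =
      ENNReal.ofReal (1 - γ) * poissonSubsample γ M D S +
      ENNReal.ofReal γ * ∑ s ∈ D.powerset,
        (ENNReal.ofReal γ ^ s.card * ENNReal.ofReal (1 - γ) ^ (D.card - s.card)) *
          M (insert i s) S := by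
  have hdisj : Disjoint D.powerset (D.powerset.image (insert i)) := by
    rw [Finset.disjoint_left]
    intro a ha hb
    obtain ⟨s, hs, rfl⟩ := Finset.mem_image.mp hb
    exact hi (Finset.mem_powerset.mp ha (Finset.mem_insert_self i s))
  have hinj : ∀ x ∈ D.powerset, ∀ y ∈ D.powerset, insert i x = insert i y → x = y := by
    intro x hx y hy h
    have hix : i ∉ x := fun hmem => hi (Finset.mem_powerset.mp hx hmem)
    have hiy : i ∉ y := fun hmem => hi (Finset.mem_powerset.mp hy hmem)
    rw [← Finset.erase_insert hix, h, Finset.erase_insert hiy]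
  rw [poissonSubsample_apply, poissonSubsample_apply, Finset.powerset_insert,
    Finset.sum_union hdisj, Finset.sum_image hinj, Finset.mul_sum, Finset.mul_sum]
  congr 1
  · refine Finset.sum_congr rfl fun s hs => ?_
    have hsc : s.card ≤ D.card := Finset.card_le_card (Finset.mem_powerset.mp hs)
    have hDc : (insert i D).card = D.card + 1 := Finset.card_insert_of_notMem hi
    have he : (insert i D).card - s.card = (D.card - s.card) + 1 := by omega
    rw [he, pow_succ]
    ring
  · refine Finset.sum_congr rfl fun s hs => ?_
    have hsc : s.card ≤ D.card := Finset.card_le_card (Finset.mem_powerset.mp hs)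
    have his : i ∉ s := fun hmem => hi (Finset.mem_powerset.mp hs hmem)
    have hDc : (insert i D).card = D.card + 1 := Finset.card_insert_of_notMem hi
    have hsc' : (insert i s).card = s.card + 1 := Finset.card_insert_of_notMem his
    have he : (insert i D).card - (insert i s).card = D.card - s.card := by omega
    rw [he, hsc', pow_succ]
    ring

/-- Privacy amplification by Poisson subsampling. -/
theorem poisson_subsampling_amplification
    (M : Finset ι → Measure Ω) (ε δ γ : ℝ) (hε : 0 ≤ ε) (hδ : 0 ≤ δ)
    (hγ0 : 0 ≤ γ) (hγ1 : γ ≤ 1) (hM : IsDP M ε δ) :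
    IsDP (poissonSubsample γ M) (Real.log (1 + γ * (Real.exp ε - 1))) (γ * δ) := by
  set A := Real.exp ε with hA_def
  have hA1 : (1:ℝ) ≤ A := Real.one_le_exp hε
  have hc0 : (0:ℝ) < 1 + γ * (A - 1) := by nlinarith
  have hc1 : (1:ℝ) ≤ 1 + γ * (A - 1) := by nlinarith
  have hexp : Real.exp (Real.log (1 + γ * (A - 1))) = 1 + γ * (A - 1) := Real.exp_log hc0
  -- the two directional estimates
  have key : ∀ (D : Finset ι), ∀ i ∉ D, ∀ S : Set Ω, MeasurableSet S →
      poissonSubsample γ M (insert i D) S ≤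
        ENNReal.ofReal (1 + γ * (A - 1)) * poissonSubsample γ M D S +
          ENNReal.ofReal (γ * δ) ∧
      poissonSubsample γ M D S ≤
        ENNReal.ofReal (1 + γ * (A - 1)) * poissonSubsample γ M (insert i D) S +
          ENNReal.ofReal (γ * δ) := by
    intro D i hi S hS
    set w : Finset ι → ENNReal := fun s =>
      ENNReal.ofReal γ ^ s.card * ENNReal.ofReal (1 - γ) ^ (D.card - s.card) with hw
    set P := poissonSubsample γ M D S with hP
    set Q := ∑ s ∈ D.powerset, w s * M (insert i s) S with hQ
    have hPs : P = ∑ s ∈ D.powerset, w s * M s S := poissonSubsample_apply γ M D S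
    have hW : ∑ s ∈ D.powerset, w s = 1 := poisson_sum_weights γ hγ0 hγ1 D
    have hdecomp : poissonSubsample γ M (insert i D) S =
        ENNReal.ofReal (1 - γ) * P + ENNReal.ofReal γ * Q :=
      poissonSubsample_insert_apply γ M D i hi S
    -- Q ≤ A * P + δ
    have hQP : Q ≤ ENNReal.ofReal A * P + ENNReal.ofReal δ := by
      calc Q ≤ ∑ s ∈ D.powerset, w s * (ENNReal.ofReal A * M s S + ENNReal.ofReal δ) := by
            refine Finset.sum_le_sum fun s hs => ?_
            refine mul_le_mul_right ?_ _
            have hnb : Neighbors (insert i s) s := by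
              right
              exact ⟨i, fun hmem => hi (Finset.mem_powerset.mp hs hmem), rfl⟩
            exact hM _ _ hnb S hS
        _ = ENNReal.ofReal A * P + ENNReal.ofReal δ := by
            simp only [mul_add]
            rw [Finset.sum_add_distrib, hPs, Finset.mul_sum]
            congr 1
            · exact Finset.sum_congr rfl fun s _ => by ring
            · rw [← Finset.sum_mul, hW, one_mul]
    -- P ≤ A * Q + δ
    have hPQ : P ≤ ENNReal.ofReal A * Q + ENNReal.ofReal δ := by
      calc P = ∑ s ∈ D.powerset, w s * M s S := hPs
        _ ≤ ∑ s ∈ D.powerset, w s * (ENNReal.ofReal A * M (insert i s) S + ENNReal.ofReal δ) := by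
            refine Finset.sum_le_sum fun s hs => ?_
            refine mul_le_mul_right ?_ _
            have hnb : Neighbors s (insert i s) := by
              left
              exact ⟨i, fun hmem => hi (Finset.mem_powerset.mp hs hmem), rfl⟩
            exact hM _ _ hnb S hS
        _ = ENNReal.ofReal A * Q + ENNReal.ofReal δ := by
            simp only [mul_add]
            rw [Finset.sum_add_distrib, hQ, Finset.mul_sum]
            congr 1
            · exact Finset.sum_congr rfl fun s _ => by ring
            · rw [← Finset.sum_mul, hW, one_mul]
    have h1γ : (0:ℝ) ≤ 1 - γ := by linarith
    constructor
    · -- addition direction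
      rw [hdecomp]
      calc ENNReal.ofReal (1 - γ) * P + ENNReal.ofReal γ * Q
          ≤ ENNReal.ofReal (1 - γ) * P +
              ENNReal.ofReal γ * (ENNReal.ofReal A * P + ENNReal.ofReal δ) :=
            add_le_add_right (mul_le_mul_right hQP _) _
        _ = (ENNReal.ofReal (1 - γ) + ENNReal.ofReal (γ * A)) * P +
              ENNReal.ofReal (γ * δ) := by
            rw [ENNReal.ofReal_mul hγ0, ENNReal.ofReal_mul hγ0]
            ring
        _ = ENNReal.ofReal (1 + γ * (A - 1)) * P + ENNReal.ofReal (γ * δ) := by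
            rw [← ENNReal.ofReal_add h1γ (by nlinarith)]
            ring_nf
    · -- removal direction
      rw [hdecomp]
      set lam := (1 - γ) * (1 + γ * (A - 1)) with hlam
      have hlam0 : 0 ≤ lam := mul_nonneg h1γ (le_of_lt hc0)
      have hPle : P ≤ ENNReal.ofReal (1 + γ * (A - 1)) * (ENNReal.ofReal (1 - γ) * P) +
          (ENNReal.ofReal (1 + γ * (A - 1)) * (ENNReal.ofReal γ * Q) +
            ENNReal.ofReal (γ * δ)) := by
        rcases le_or_gt 1 lam with hl | hl
        · calc P = 1 * P := (one_mul P).symm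
            _ ≤ ENNReal.ofReal lam * P :=
                mul_le_mul_left (by simpa using ENNReal.ofReal_le_ofReal hl) P
            _ = ENNReal.ofReal (1 + γ * (A - 1)) * (ENNReal.ofReal (1 - γ) * P) := by
                rw [hlam, ENNReal.ofReal_mul h1γ]; ring
            _ ≤ _ := le_add_right le_rfl
        · have hsplit : P = ENNReal.ofReal lam * P + ENNReal.ofReal (1 - lam) * P := by
            rw [← add_mul, ← ENNReal.ofReal_add hlam0 (by linarith)]
            norm_num
          have hstep : ENNReal.ofReal (1 - lam) * P ≤
              ENNReal.ofReal (1 + γ * (A - 1)) * (ENNReal.ofReal γ * Q) +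
                ENNReal.ofReal (γ * δ) := by
            calc ENNReal.ofReal (1 - lam) * P
                ≤ ENNReal.ofReal (1 - lam) * (ENNReal.ofReal A * Q + ENNReal.ofReal δ) :=
                  mul_le_mul_right hPQ _
              _ = ENNReal.ofReal ((1 - lam) * A) * Q + ENNReal.ofReal ((1 - lam) * δ) := by
                  rw [ENNReal.ofReal_mul (by linarith), ENNReal.ofReal_mul (by linarith)]
                  ring
              _ ≤ ENNReal.ofReal ((1 + γ * (A - 1)) * γ) * Q + ENNReal.ofReal (γ * δ) := by
                  refine add_le_add ?_ ?_
                  · refine mul_le_mul_left (ENNReal.ofReal_le_ofReal ?_) Q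
                    nlinarith [mul_nonneg (mul_nonneg hγ0 h1γ) (sq_nonneg (A - 1))]
                  · refine ENNReal.ofReal_le_ofReal ?_
                    have h1lam : 1 - lam ≤ γ := by nlinarith
                    nlinarith
              _ = ENNReal.ofReal (1 + γ * (A - 1)) * (ENNReal.ofReal γ * Q) +
                    ENNReal.ofReal (γ * δ) := by
                  rw [ENNReal.ofReal_mul (le_of_lt hc0)]
                  ring
          calc P = ENNReal.ofReal lam * P + ENNReal.ofReal (1 - lam) * P := hsplit
            _ ≤ ENNReal.ofReal lam * P +
                (ENNReal.ofReal (1 + γ * (A - 1)) * (ENNReal.ofReal γ * Q) +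
                  ENNReal.ofReal (γ * δ)) := add_le_add_right hstep _
            _ = _ := by
                rw [hlam, ENNReal.ofReal_mul h1γ]
                ring
      calc P ≤ _ := hPle
        _ = ENNReal.ofReal (1 + γ * (A - 1)) *
              (ENNReal.ofReal (1 - γ) * P + ENNReal.ofReal γ * Q) +
              ENNReal.ofReal (γ * δ) := by ring
  intro D D' hN S hS
  rw [hexp]
  rcases hN with ⟨i, hi, rfl⟩ | ⟨i, hi, rfl⟩
  · exact (key D i hi S hS).2
  · exact (key D' i hi S hS).1
end

section
/- Report Noisy Max with Exponential Noise: let q₁(D), ..., q_k(D) be scoring functions each with ℓ∞-sensitivity at most Δ (i.e., |q_j(D) − q_j(D')| ≤ Δ for all neighboring D, D' and all j). The mechanism that outputs argmax_j (q_j(D) + Z_j), where Z_j are i.i.d. Exponential(ε/(2Δ)) random variables, is (ε, 0)-differentially private. -/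
open MeasureTheory

variable {X : Type*}

/-- Pure `(ε, 0)`-differential privacy with respect to a neighboring relation `N`. -/
def IsPureDP {Ω : Type*} [MeasurableSpace Ω] (N : X → X → Prop)
    (M : X → Measure Ω) (ε : ℝ) : Prop :=
  ∀ D D', N D D' → ∀ S : Set Ω,
    M D S ≤ ENNReal.ofReal (Real.exp ε) * M D' S

section Aux

open ProbabilityTheory Real Set


lemma expPDF_shift {r c : ℝ} (hr : 0 < r) (hc : 0 ≤ c) (x : ℝ) :
    exponentialPDF r (x - c) ≤ ENNReal.ofReal (Real.exp (r * c)) * exponentialPDF r x := by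
  by_cases h : 0 ≤ x - c
  · have hx : 0 ≤ x := by linarith
    rw [exponentialPDF_of_nonneg h, exponentialPDF_of_nonneg hx,
      ← ENNReal.ofReal_mul (exp_nonneg _)]
    apply ENNReal.ofReal_le_ofReal
    rw [mul_comm (exp (r*c)), mul_assoc, ← Real.exp_add]
    apply le_of_eq
    ring_nf
  · rw [exponentialPDF_of_neg (by linarith)]
    exact zero_le

lemma expMeasure_shift_le {r c : ℝ} (hr : 0 < r) (hc : 0 ≤ c) {A : Set ℝ}
    (hA : MeasurableSet A) :
    expMeasure r ((· + c) ⁻¹' A) ≤ ENNReal.ofReal (Real.exp (r * c)) * expMeasure r A := by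
  have hpdf : exponentialPDF r = gammaPDF 1 r := rfl
  have hB : MeasurableSet ((· + c) ⁻¹' A) := (measurable_add_const c) hA
  have happly : ∀ {B : Set ℝ}, MeasurableSet B →
      expMeasure r B = ∫⁻ x, B.indicator (exponentialPDF r) x := by
    intro B hBm
    rw [expMeasure, gammaMeasure, withDensity_apply _ hBm, lintegral_indicator hBm, hpdf]
  rw [happly hB, happly hA]
  have htrans : ∫⁻ x, ((· + c) ⁻¹' A).indicator (exponentialPDF r) x
      = ∫⁻ x, ((· + c) ⁻¹' A).indicator (exponentialPDF r) (x + -c) :=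
    (lintegral_add_right_eq_self _ (-c)).symm
  rw [htrans]
  have hpt : ∀ x, ((· + c) ⁻¹' A).indicator (exponentialPDF r) (x + -c)
      ≤ ENNReal.ofReal (Real.exp (r * c)) * A.indicator (exponentialPDF r) x := by
    intro x
    by_cases hx : x ∈ A
    · have : x + -c ∈ (· + c) ⁻¹' A := by simpa using hx
      rw [Set.indicator_of_mem this, Set.indicator_of_mem hx]
      simpa [sub_eq_add_neg] using expPDF_shift hr hc x
    · have : x + -c ∉ (· + c) ⁻¹' A := by simpa using hx
      rw [Set.indicator_of_notMem this, Set.indicator_of_notMem hx]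
      simp
  calc ∫⁻ x, ((· + c) ⁻¹' A).indicator (exponentialPDF r) (x + -c)
      ≤ ∫⁻ x, ENNReal.ofReal (Real.exp (r * c)) * A.indicator (exponentialPDF r) x :=
        lintegral_mono hpt
    _ = ENNReal.ofReal (Real.exp (r * c)) * ∫⁻ x, A.indicator (exponentialPDF r) x :=
        lintegral_const_mul' _ _ ENNReal.ofReal_ne_top


lemma argmax_transfer {k : ℕ} {u v : Fin k → ℝ} {Δ : ℝ} (hΔ : 0 < Δ)
    (hs : ∀ i, |u i - v i| ≤ Δ) (j : Fin k) {Z Z' : Fin k → ℝ}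
    (hZj : Z' j = Z j + 2 * Δ) (hZi : ∀ i, i ≠ j → Z' i = Z i)
    (h : (List.finRange k).argmax (fun i => u i + Z i) = some j) :
    (List.finRange k).argmax (fun i => v i + Z' i) = some j := by
  rw [List.argmax_eq_some_iff] at h ⊢
  obtain ⟨-, hle, htie⟩ := h
  refine ⟨List.mem_finRange j, ?_, ?_⟩
  · intro a _
    by_cases ha : a = j
    · subst ha; exact le_refl _
    · have h1 := abs_le.mp (hs a)
      have h2 := abs_le.mp (hs j)
      have h3 := hle a (List.mem_finRange a)
      have h4 := hZi a ha
      show v a + Z' a ≤ v j + Z' j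
      linarith [hZj]
  · intro a _ hge
    by_cases ha : a = j
    · subst ha; exact le_refl _
    · have h1 := abs_le.mp (hs a)
      have h2 := abs_le.mp (hs j)
      have h4 := hZi a ha
      have hge' : v j + Z' j ≤ v a + Z' a := hge
      have : u j + Z j ≤ u a + Z a := by linarith [hZj]
      exact htie a (List.mem_finRange a) this

lemma getD_argmax_iff {k : ℕ} (hk : 0 < k) (f : Fin k → ℝ) (j d : Fin k) :
    (((List.finRange k).argmax f).getD d = j) ↔ (List.finRange k).argmax f = some j := by
  cases h : (List.finRange k).argmax f with
  | none =>
    exfalso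
    rw [List.argmax_eq_none, List.finRange_eq_nil_iff] at h
    omega
  | some m => simp

lemma noisyMax_preimage {k : ℕ} (hk : 0 < k) (u : Fin k → ℝ) (j d : Fin k) :
    (fun Z : Fin k → ℝ => ((List.finRange k).argmax (fun i => u i + Z i)).getD d) ⁻¹' {j}
      = {Z : Fin k → ℝ | (∀ i, u i + Z i ≤ u j + Z j) ∧
          ∀ i, u j + Z j ≤ u i + Z i → (j : ℕ) ≤ (i : ℕ)} := by
  ext Z
  simp only [Set.mem_preimage, Set.mem_singleton_iff, Set.mem_setOf_eq,
    getD_argmax_iff hk, List.argmax_eq_some_iff]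
  simp [List.mem_finRange]

lemma measurable_noisyMax {k : ℕ} (hk : 0 < k) (u : Fin k → ℝ) (d : Fin k) :
    Measurable fun Z : Fin k → ℝ =>
      ((List.finRange k).argmax (fun i => u i + Z i)).getD d := by
  apply measurable_to_countable'
  intro j
  rw [noisyMax_preimage hk u j d]
  have : {Z : Fin k → ℝ | (∀ i, u i + Z i ≤ u j + Z j) ∧
      ∀ i, u j + Z j ≤ u i + Z i → (j : ℕ) ≤ (i : ℕ)}
    = (⋂ i, {Z : Fin k → ℝ | u i + Z i ≤ u j + Z j}) ∩
      (⋂ i, {Z : Fin k → ℝ | u j + Z j ≤ u i + Z i → (j : ℕ) ≤ (i : ℕ)}) := by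
    ext Z; simp [Set.mem_iInter, forall_and]
  rw [this]
  apply MeasurableSet.inter
  · exact MeasurableSet.iInter fun i =>
      measurableSet_le (by fun_prop) (by fun_prop)
  · refine MeasurableSet.iInter fun i => ?_
    by_cases hj : (j : ℕ) ≤ (i : ℕ)
    · have : {Z : Fin k → ℝ | u j + Z j ≤ u i + Z i → (j : ℕ) ≤ (i : ℕ)} = Set.univ := by
        ext Z; simp [hj]
      rw [this]; exact MeasurableSet.univ
    · have : {Z : Fin k → ℝ | u j + Z j ≤ u i + Z i → (j : ℕ) ≤ (i : ℕ)}
          = {Z : Fin k → ℝ | u i + Z i < u j + Z j} := by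
        ext Z; simp [hj]
      rw [this]
      exact measurableSet_lt (by fun_prop) (by fun_prop)

end Aux

open ProbabilityTheory Real Set in
/-- Report Noisy Max with Exponential noise: given `k` scoring functions each of
ℓ∞-sensitivity at most `Δ`, outputting the index maximizing `q j D + Z j` with
`Z j` i.i.d. `Expo(ε/(2Δ))` is `(ε, 0)`-differentially private. -/
theorem report_noisy_max_exponential (N : X → X → Prop)
    (k : ℕ) (hk : 0 < k) (q : Fin k → X → ℝ) (Δ ε : ℝ)
    (hΔ : 0 < Δ) (hε : 0 < ε)
    (hsens : ∀ D D', N D D' → ∀ j, |q j D - q j D'| ≤ Δ) :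
    IsPureDP N
      (fun D =>
        (Measure.pi fun _ : Fin k => ProbabilityTheory.expMeasure (ε / (2 * Δ))).map
          (fun Z => ((List.finRange k).argmax (fun j => q j D + Z j)).getD ⟨0, hk⟩))
      ε := by
  obtain ⟨n, rfl⟩ : ∃ n, k = n + 1 := ⟨k - 1, (Nat.succ_pred_eq_of_pos hk).symm⟩
  intro D D' hN S
  set r : ℝ := ε / (2 * Δ) with hrdef
  have hr : 0 < r := div_pos hε (by positivity)
  have hrΔ : r * (2 * Δ) = ε := div_mul_cancel₀ ε (by positivity : (0:ℝ) < 2*Δ).ne'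
  haveI : IsProbabilityMeasure (expMeasure r) := isProbabilityMeasure_expMeasure hr
  set μ : Measure (Fin (n+1) → ℝ) := Measure.pi fun _ => expMeasure r with hμdef
  set g : X → (Fin (n+1) → ℝ) → Fin (n+1) :=
    fun D₀ Z => ((List.finRange (n+1)).argmax (fun i => q i D₀ + Z i)).getD ⟨0, hk⟩ with hgdef
  have hg : ∀ D₀, Measurable (g D₀) := fun D₀ => measurable_noisyMax hk _ _
  -- singleton bound
  have key : ∀ j : Fin (n+1),
      μ (g D ⁻¹' {j}) ≤ ENNReal.ofReal (Real.exp ε) * μ (g D' ⁻¹' {j}) := by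
    intro j
    set e := MeasurableEquiv.piFinSuccAbove (fun _ : Fin (n+1) => ℝ) j with hedef
    have hmp := measurePreserving_piFinSuccAbove (fun _ : Fin (n+1) => expMeasure r) j
    set ν : Measure (Fin n → ℝ) := Measure.pi fun _ => expMeasure r with hνdef
    have hA : MeasurableSet (g D ⁻¹' {j}) := hg D (measurableSet_singleton j)
    have hA' : MeasurableSet (g D' ⁻¹' {j}) := hg D' (measurableSet_singleton j)
    have hsymm : ∀ (x : ℝ) (w : Fin n → ℝ), e.symm (x, w) = Fin.insertNth j x w := by
      intro x w
      rfl
    have conv : ∀ {A : Set (Fin (n+1) → ℝ)}, MeasurableSet A →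
        μ A = ∫⁻ w, expMeasure r {x | e.symm (x, w) ∈ A} ∂ν := by
      intro A hAm
      have hB : MeasurableSet (e.symm ⁻¹' A) := e.symm.measurable hAm
      have h1 : μ A = ((expMeasure r).prod ν) (e.symm ⁻¹' A) := by
        rw [← hmp.measure_preimage_equiv (e.symm ⁻¹' A)]
        congr 1
        ext Z
        simp only [Set.mem_preimage]
        rw [hsymm]
        simp [Fin.insertNth_self_removeNth]
      rw [h1, Measure.prod_apply_symm hB]
      rfl
    rw [conv hA, conv hA']
    -- slice inequality
    have slice : ∀ w : Fin n → ℝ,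
        expMeasure r {x | e.symm (x, w) ∈ g D ⁻¹' {j}}
          ≤ ENNReal.ofReal (Real.exp ε) * expMeasure r {x | e.symm (x, w) ∈ g D' ⁻¹' {j}} := by
      intro w
      have hE' : MeasurableSet {x : ℝ | e.symm (x, w) ∈ g D' ⁻¹' {j}} := by
        have hm : Measurable fun x : ℝ => e.symm (x, w) :=
          e.symm.measurable.comp (measurable_id.prodMk measurable_const)
        exact hm hA'
      have hsub : {x : ℝ | e.symm (x, w) ∈ g D ⁻¹' {j}}
          ⊆ (· + 2 * Δ) ⁻¹' {x : ℝ | e.symm (x, w) ∈ g D' ⁻¹' {j}} := by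
        intro x hx
        simp only [Set.mem_setOf_eq, Set.mem_preimage, Set.mem_singleton_iff] at hx ⊢
        rw [hgdef] at hx ⊢
        simp only at hx ⊢
        rw [getD_argmax_iff hk] at hx ⊢
        refine argmax_transfer hΔ (fun i => hsens D D' hN i) j ?_ ?_ hx
        · rw [hsymm, hsymm, Fin.insertNth_apply_same, Fin.insertNth_apply_same]
        · intro i hi
          obtain ⟨l, rfl⟩ := Fin.exists_succAbove_eq hi
          rw [hsymm, hsymm, Fin.insertNth_apply_succAbove, Fin.insertNth_apply_succAbove]
      calc expMeasure r {x | e.symm (x, w) ∈ g D ⁻¹' {j}}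
          ≤ expMeasure r ((· + 2 * Δ) ⁻¹' {x | e.symm (x, w) ∈ g D' ⁻¹' {j}}) :=
            measure_mono hsub
        _ ≤ ENNReal.ofReal (Real.exp (r * (2 * Δ))) * expMeasure r {x | e.symm (x, w) ∈ g D' ⁻¹' {j}} :=
            expMeasure_shift_le hr (by positivity) hE'
        _ = _ := by rw [hrΔ]
    calc ∫⁻ w, expMeasure r {x | e.symm (x, w) ∈ g D ⁻¹' {j}} ∂ν
        ≤ ∫⁻ w, ENNReal.ofReal (Real.exp ε) * expMeasure r {x | e.symm (x, w) ∈ g D' ⁻¹' {j}} ∂ν :=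
          lintegral_mono slice
      _ = _ := lintegral_const_mul' _ _ ENNReal.ofReal_ne_top
  -- assemble over S
  have hSm : MeasurableSet S := MeasurableSet.of_discrete
  have hmap : ∀ D₀, (μ.map (g D₀)) S = μ (g D₀ ⁻¹' S) := fun D₀ =>
    Measure.map_apply (hg D₀) hSm
  show (μ.map (g D)) S ≤ ENNReal.ofReal (Real.exp ε) * (μ.map (g D')) S
  rw [hmap D, hmap D']
  have hdecomp : ∀ D₀, μ (g D₀ ⁻¹' S) = ∑ j ∈ S.toFinite.toFinset, μ (g D₀ ⁻¹' {j}) := by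
    intro D₀
    have : g D₀ ⁻¹' S = ⋃ j ∈ S.toFinite.toFinset, g D₀ ⁻¹' {j} := by
      ext Z
      simp [Set.Finite.mem_toFinset]
    rw [this, measure_biUnion_finset]
    · intro a _ b _ hab
      simp only [Function.onFun]
      apply Disjoint.preimage
      simp [Set.disjoint_singleton, hab]
    · exact fun j _ => hg D₀ (measurableSet_singleton j)
  rw [hdecomp D, hdecomp D', Finset.mul_sum]
  exact Finset.sum_le_sum fun j _ => key j
end

section
/- The function δ(ε) = Φ(Δ/(2σ) − εσ/Δ) − e^ε · Φ(−Δ/(2σ) − εσ/Δ) is nonnegative for all ε ≥ 0, where Φ is the standard normal CDF, Δ > 0, and σ > 0. -/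
open MeasureTheory Real Set

noncomputable def Phi (t : ℝ) : ℝ :=
  ∫ x in Set.Iic t, (1 / Real.sqrt (2 * Real.pi)) * Real.exp (-x ^ 2 / 2)

lemma gauss_integrable : Integrable (fun x : ℝ => (1 / Real.sqrt (2 * Real.pi)) * Real.exp (-x ^ 2 / 2)) := by
  have h : Integrable (fun x : ℝ => Real.exp (-(1/2) * x ^ 2)) :=
    integrable_exp_neg_mul_sq (by norm_num)
  have := h.const_mul (1 / Real.sqrt (2 * Real.pi))
  refine this.congr (Filter.Eventually.of_forall fun x => ?_)
  ring_nf

lemma Phi_shift (c d : ℝ) :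
    Phi c = ∫ x in Set.Iic (c + d), (1 / Real.sqrt (2 * Real.pi)) * Real.exp (-(x - d) ^ 2 / 2) := by
  unfold Phi
  set f : ℝ → ℝ := fun x => (1 / Real.sqrt (2 * Real.pi)) * Real.exp (-x ^ 2 / 2) with hf
  rw [← integral_indicator measurableSet_Iic, ← integral_indicator measurableSet_Iic]
  rw [← integral_add_right_eq_self (fun x => (Set.Iic c).indicator f x) (-d)]
  congr 1
  funext x
  by_cases h : x ≤ c + d
  · rw [Set.indicator_of_mem (show x + -d ∈ Set.Iic c from Set.mem_Iic.mpr (by linarith)),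
      Set.indicator_of_mem (Set.mem_Iic.mpr h)]
    simp only [hf]
    ring_nf
  · rw [Set.indicator_of_notMem (show x + -d ∉ Set.Iic c from
        fun hm => h (by have := Set.mem_Iic.mp hm; linarith)),
      Set.indicator_of_notMem (fun hm => h (Set.mem_Iic.mp hm))]

/-- The privacy curve of the Gaussian mechanism is nonnegative for `ε ≥ 0`. -/
theorem gaussian_privacy_curve_nonneg (Δ σ : ℝ) (hΔ : 0 < Δ) (hσ : 0 < σ)
    (ε : ℝ) (hε : 0 ≤ ε) :
    0 ≤ Phi (Δ / (2 * σ) - ε * σ / Δ) -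
        Real.exp ε * Phi (-(Δ / (2 * σ)) - ε * σ / Δ) := by
  set a := Δ / (2 * σ) with ha
  set t := ε * σ / Δ with ht
  have ha0 : 0 < a := by positivity
  have hat : 2 * a * t = ε := by
    rw [ha, ht]; field_simp
  have h2 : Phi (-a - t) = ∫ x in Set.Iic (a - t),
      (1 / Real.sqrt (2 * Real.pi)) * Real.exp (-(x - 2 * a) ^ 2 / 2) := by
    have := Phi_shift (-a - t) (2 * a)
    rw [this]; ring_nf
  rw [h2]
  have hint1 := gauss_integrable.integrableOn (s := Set.Iic (a - t))
  have hint2 : IntegrableOn (fun x : ℝ => (1 / Real.sqrt (2 * Real.pi)) * Real.exp (-(x - 2 * a) ^ 2 / 2)) (Set.Iic (a - t)) := by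
    have := (gauss_integrable.comp_sub_right (2 * a)).integrableOn (s := Set.Iic (a - t))
    exact this
  unfold Phi
  rw [← integral_const_mul, ← integral_sub hint1 (hint2.const_mul _)]
  refine setIntegral_nonneg measurableSet_Iic fun x hx => ?_
  have hx' : x ≤ a - t := hx
  have key : Real.exp ε * Real.exp (-(x - 2 * a) ^ 2 / 2) ≤ Real.exp (-x ^ 2 / 2) := by
    rw [← Real.exp_add]
    apply Real.exp_le_exp.mpr
    nlinarith [hat, mul_nonneg ha0.le hε]
  have hc : 0 < 1 / Real.sqrt (2 * Real.pi) := by positivity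
  have : Real.exp ε * ((1 / Real.sqrt (2 * Real.pi)) * Real.exp (-(x - 2 * a) ^ 2 / 2))
      ≤ (1 / Real.sqrt (2 * Real.pi)) * Real.exp (-x ^ 2 / 2) := by
    calc Real.exp ε * ((1 / Real.sqrt (2 * Real.pi)) * Real.exp (-(x - 2 * a) ^ 2 / 2))
        = (1 / Real.sqrt (2 * Real.pi)) * (Real.exp ε * Real.exp (-(x - 2 * a) ^ 2 / 2)) := by ring
      _ ≤ _ := by exact mul_le_mul_of_nonneg_left key hc.le
  linarith
end

section
/- The function δ(ε) = Φ(Δ/(2σ) − εσ/Δ) − e^ε · Φ(−Δ/(2σ) − εσ/Δ) is monotonically decreasing in ε on [0, ∞), for fixed Δ > 0 and σ > 0, where Φ is the standard normal CDF. -/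
noncomputable def phi (x : ℝ) : ℝ :=
  (1 / Real.sqrt (2 * Real.pi)) * Real.exp (-x ^ 2 / 2)

lemma phi_integrable : MeasureTheory.Integrable phi := by
  have h : MeasureTheory.Integrable (fun x : ℝ => Real.exp (-(1/2 : ℝ) * x ^ 2)) :=
    integrable_exp_neg_mul_sq (by norm_num)
  have := h.const_mul (1 / Real.sqrt (2 * Real.pi))
  refine this.congr (Filter.Eventually.of_forall fun x => ?_)
  simp only [phi]
  ring_nf

lemma phi_continuous : Continuous phi := by
  unfold phi
  fun_prop

lemma phi_nonneg (x : ℝ) : 0 ≤ phi x := by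
  unfold phi
  positivity

lemma Phi_nonneg (t : ℝ) : 0 ≤ Phi t := by
  apply MeasureTheory.setIntegral_nonneg measurableSet_Iic
  intro x _
  positivity

lemma hasDerivAt_Phi (t : ℝ) : HasDerivAt Phi (phi t) t := by
  have key : ∀ s : ℝ, Phi s = Phi 0 + ∫ x in (0:ℝ)..s, phi x := by
    intro s
    have := intervalIntegral.integral_Iic_sub_Iic
      (phi_integrable.integrableOn (s := Set.Iic (0:ℝ)))
      (phi_integrable.integrableOn (s := Set.Iic s))
    simp only [Phi, phi] at this ⊢
    linarith
  have hD : HasDerivAt (fun s => Phi 0 + ∫ x in (0:ℝ)..s, phi x) (phi t) t := by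
    apply HasDerivAt.const_add
    exact intervalIntegral.integral_hasDerivAt_right
      phi_integrable.intervalIntegrable
      (phi_continuous.stronglyMeasurableAtFilter _ _)
      phi_continuous.continuousAt
  exact hD.congr_of_eventuallyEq (Filter.Eventually.of_forall fun s => key s)

/-- The privacy curve of the Gaussian mechanism is monotonically decreasing
in `ε` on `[0, ∞)`. -/
theorem gaussian_privacy_curve_antitone (Δ σ : ℝ) (hΔ : 0 < Δ) (hσ : 0 < σ) :
    AntitoneOn
      (fun ε : ℝ =>
        Phi (Δ / (2 * σ) - ε * σ / Δ) -
          Real.exp ε * Phi (-(Δ / (2 * σ)) - ε * σ / Δ))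
      (Set.Ici 0) := by
  set a : ℝ := Δ / (2 * σ) with ha
  set c : ℝ := σ / Δ with hc
  have hc0 : 0 < c := div_pos hσ hΔ
  -- derivative of the whole function at any ε
  have hderiv : ∀ ε : ℝ, HasDerivAt
      (fun ε : ℝ => Phi (a - ε * σ / Δ) - Real.exp ε * Phi (-a - ε * σ / Δ))
      (-(Real.exp ε * Phi (-a - ε * σ / Δ))) ε := by
    intro ε
    have hlin1 : HasDerivAt (fun ε : ℝ => a - ε * σ / Δ) (-c) ε := by
      have h := ((hasDerivAt_id ε).mul_const c).const_sub a
      simp only [one_mul] at h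
      refine h.congr_of_eventuallyEq (Filter.Eventually.of_forall fun s => ?_)
      simp only [hc, id_eq]; ring
    have hlin2 : HasDerivAt (fun ε : ℝ => -a - ε * σ / Δ) (-c) ε := by
      have h := ((hasDerivAt_id ε).mul_const c).const_sub (-a)
      simp only [one_mul] at h
      refine h.congr_of_eventuallyEq (Filter.Eventually.of_forall fun s => ?_)
      simp only [hc, id_eq]; ring
    have h1 : HasDerivAt (fun ε : ℝ => Phi (a - ε * σ / Δ))
        (phi (a - ε * σ / Δ) * (-c)) ε :=
      (hasDerivAt_Phi _).comp ε hlin1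
    have h2 : HasDerivAt (fun ε : ℝ => Phi (-a - ε * σ / Δ))
        (phi (-a - ε * σ / Δ) * (-c)) ε :=
      (hasDerivAt_Phi _).comp ε hlin2
    have h3 : HasDerivAt (fun ε : ℝ => Real.exp ε * Phi (-a - ε * σ / Δ))
        (Real.exp ε * Phi (-a - ε * σ / Δ) +
          Real.exp ε * (phi (-a - ε * σ / Δ) * (-c))) ε :=
      (Real.hasDerivAt_exp ε).mul h2
    have htot := h1.sub h3
    -- key identity : phi (a - εc) = exp ε * phi (-a - εc)
    have hkey : phi (a - ε * σ / Δ) = Real.exp ε * phi (-a - ε * σ / Δ) := by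
      unfold phi
      have hexp : Real.exp (-(a - ε * σ / Δ) ^ 2 / 2)
          = Real.exp ε * Real.exp (-(-a - ε * σ / Δ) ^ 2 / 2) := by
        rw [← Real.exp_add]
        congr 1
        simp only [ha]
        field_simp
        ring
      rw [hexp]
      ring
    convert htot using 1
    · rfl
    · rfl
    · rfl
    rw [hkey]
    ring
  apply antitoneOn_of_deriv_nonpos (convex_Ici 0)
  · exact fun x _ => ((hderiv x).differentiableAt.continuousAt).continuousWithinAt
  · intro x _
    exact (hderiv x).differentiableAt.differentiableWithinAt
  · intro x _
    rw [(hderiv x).deriv]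
    have := Phi_nonneg (-a - x * σ / Δ)
    have := Real.exp_pos x
    nlinarith
end
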